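/- arXiv:2510.15773 — 12 statements merged into one kernel-verified Lean document; each statement's English description precedes it below -/
import Mathlib

section
/- Let MSE(p) = β σ² / (ρ τ p β |Φ|² + σ²) denote the per-component channel-estimation mean-square error of the Rydberg atomic receiver under Rayleigh fading (Rician factor δ = 0), and let MSE_RF(p) = β σ_RF² / (ρ_RF τ p β + σ_RF²) denote that of the conventional RF receiver. Then lim_{p → ∞} MSE_RF(p) / MSE(p) = κ, where κ = (ρ |Φ|² / σ²) / (ρ_RF / σ_RF²); i.e., in the high-SNR regime the channel estimation of the atomic receiver is enhanced over the RF receiver exactly by the normalized-noise ratio κ (equivalently, by 10·lg κ dB). -/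
open Filter

/-- In the high-SNR regime `p → ∞`, the ratio of the RF receiver's
channel-estimation MSE to the Rydberg atomic receiver's MSE tends to the
normalized-noise ratio `κ = (ρ|Φ|²/σ²)/(ρ_RF/σ_RF²)`. -/
theorem stmt_1
    (β τ ρ Φ2 σ2 ρRF σRF2 : ℝ)
    (hβ : 0 < β) (hτ : 0 < τ) (hρ : 0 < ρ) (hΦ2 : 0 < Φ2) (hσ2 : 0 < σ2)
    (hρRF : 0 < ρRF) (hσRF2 : 0 < σRF2)
    (MSE MSE_RF : ℝ → ℝ) (κ : ℝ)
    (hMSE : ∀ p, MSE p = β * σ2 / (ρ * τ * p * β * Φ2 + σ2))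
    (hMSERF : ∀ p, MSE_RF p = β * σRF2 / (ρRF * τ * p * β + σRF2))
    (hκ : κ = (ρ * Φ2 / σ2) / (ρRF / σRF2)) :
    Tendsto (fun p => MSE_RF p / MSE p) atTop (nhds κ) := by
  have hlim : Tendsto
      (fun p : ℝ => (σRF2 * (ρ * τ * β * Φ2 + σ2 * p⁻¹)) /
        (σ2 * (ρRF * τ * β + σRF2 * p⁻¹))) atTop (nhds κ) := by
    have hinv : Tendsto (fun p : ℝ => p⁻¹) atTop (nhds 0) :=
      tendsto_inv_atTop_zero
    have h1 : Tendsto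
        (fun p : ℝ => (σRF2 * (ρ * τ * β * Φ2 + σ2 * p⁻¹)) /
          (σ2 * (ρRF * τ * β + σRF2 * p⁻¹))) atTop
        (nhds ((σRF2 * (ρ * τ * β * Φ2 + σ2 * 0)) /
          (σ2 * (ρRF * τ * β + σRF2 * 0)))) := by
      apply Tendsto.div
      · exact (tendsto_const_nhds.add (hinv.const_mul σ2)).const_mul σRF2
      · exact (tendsto_const_nhds.add (hinv.const_mul σRF2)).const_mul σ2
      · have : 0 < σ2 * (ρRF * τ * β + σRF2 * 0) := by positivity
        exact ne_of_gt this
    convert h1 using 2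
    rw [hκ]
    field_simp
    ring
  apply hlim.congr'
  filter_upwards [eventually_gt_atTop (0 : ℝ)] with p hp
  have hD1 : 0 < ρ * τ * p * β * Φ2 + σ2 := by positivity
  have hD2 : 0 < ρRF * τ * p * β + σRF2 := by positivity
  rw [hMSE p, hMSERF p]
  field_simp
end

section
/- Under Rayleigh fading (δ_k = 0 for all k), the Theorem-1 MRC SINR expression SINR_k^MRC = M p^d_k α_k (μ_k + δ_k)² / ( Σ_{k'=1}^K p^d_{k'} (δ_k α_{k'} + μ_k β_{k'}) + Σ_{k'≠k} p^d_{k'} (|h̄_k^H h̄_{k'}|²/M) δ_k δ_{k'} α_{k'} + (σ²/(ρ|Φ|²))(μ_k + δ_k) ) factorizes exactly as SINR_k^MRC = [ M p^d_k β_k / ( Σ_{k'=1}^K p^d_{k'} β_{k'} + σ²/(ρ|Φ|²) ) ] · (1 − NMSE_k), where NMSE_k = σ² / (ρ τ p^p_k β_k |Φ|² + σ²); i.e., imperfect CSI multiplies the perfect-CSI MRC baseline by the factor (1 − NMSE_k). -/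
open Finset

/-- Under Rayleigh fading (`δ_k = 0` for all `k`), the Theorem-1 MRC
SINR factorizes as the perfect-CSI MRC baseline times `(1 − NMSE_k)`. -/
theorem stmt_2
    (K M : ℕ) (hK : 1 ≤ K) (hM : 1 ≤ M)
    (β δ α μ pd pp : Fin K → ℝ) (hbar : Fin K → Fin M → ℂ)
    (ρ Φ2 σ2 τ : ℝ)
    (hβ : ∀ k, 0 < β k) (hpd : ∀ k, 0 < pd k) (hpp : ∀ k, 0 < pp k)
    (hρ : 0 < ρ) (hΦ2 : 0 < Φ2) (hσ2 : 0 < σ2) (hτ : 0 < τ)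
    (hδ : ∀ k, δ k = 0)
    (hα : ∀ k, α k = β k / (δ k + 1))
    (hμ : ∀ k, μ k = ρ * τ * pp k * α k * Φ2 / (ρ * τ * pp k * α k * Φ2 + σ2))
    (k : Fin K) :
    M * pd k * α k * (μ k + δ k) ^ 2 /
      ( (∑ k', pd k' * (δ k * α k' + μ k * β k'))
        + (∑ k' ∈ univ.erase k, pd k' *
            (‖∑ m, (starRingEnd ℂ) (hbar k m) * hbar k' m‖ ^ 2 / M)
            * δ k * δ k' * α k')
        + (σ2 / (ρ * Φ2)) * (μ k + δ k) )
    = (M * pd k * β k / ((∑ k', pd k' * β k') + σ2 / (ρ * Φ2)))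
        * (1 - σ2 / (ρ * τ * pp k * β k * Φ2 + σ2)) := by
  have hppk := hpp k
  have hβk := hβ k
  have hpdk := hpd k
  have hαβ : ∀ j, α j = β j := fun j => by rw [hα, hδ]; simp
  have hx : 0 < ρ * τ * pp k * β k * Φ2 := by positivity
  have hμk : μ k = ρ * τ * pp k * β k * Φ2 / (ρ * τ * pp k * β k * Φ2 + σ2) := by
    rw [hμ, hαβ]
  have hμpos : 0 < μ k := by rw [hμk]; positivity
  have hS : 0 < ∑ k', pd k' * β k' := by
    refine Finset.sum_pos (fun j _ => mul_pos (hpd j) (hβ j)) ?_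
    exact ⟨k, Finset.mem_univ k⟩
  have hc : 0 < σ2 / (ρ * Φ2) := by positivity
  have hrhs : 1 - σ2 / (ρ * τ * pp k * β k * Φ2 + σ2) = μ k := by
    rw [hμk]; field_simp; ring
  rw [hrhs]
  have h1 : ∀ k' ∈ (univ : Finset (Fin K)),
      pd k' * (δ k * α k' + μ k * β k') = μ k * (pd k' * β k') := by
    intro k' _; rw [hδ]; ring
  rw [Finset.sum_congr rfl h1, ← Finset.mul_sum]
  have h2 : ∀ k' ∈ univ.erase k,
      pd k' * (‖∑ m, (starRingEnd ℂ) (hbar k m) * hbar k' m‖ ^ 2 / M)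
        * δ k * δ k' * α k' = 0 := by
    intro k' _; rw [hδ]; ring
  rw [Finset.sum_congr rfl h2, Finset.sum_const_zero, hδ, hαβ]
  set S := ∑ k', pd k' * β k'
  have hne1 : μ k * S + 0 + σ2 / (ρ * Φ2) * (μ k + 0) ≠ 0 := by positivity
  have hne2 : S + σ2 / (ρ * Φ2) ≠ 0 := by positivity
  field_simp
  ring
end

section
/- Under Rayleigh fading (δ_k = 0 for all k, so the LoS matrix vanishes and the matrix Ψ + H̄^H H̄ / M reduces to the diagonal matrix Ψ = diag(μ_1 β_1, …, μ_K β_K)), the Theorem-2 ZF SINR expression SINR_k^ZF = (M−K) p^d_k / ( ( Σ_{k'=1}^K p^d_{k'} β_{k'}(1 − μ_{k'}) + σ²/(ρ|Φ|²) ) · [Ψ^{-1}]_{kk} ) factorizes exactly as SINR_k^ZF = [ (M−K) p^d_k β_k / (σ²/(ρ|Φ|²)) ] · (1 − NMSE_k) · 1/(1 + Δ_RI), where NMSE_k = σ²/(ρ τ p^p_k β_k |Φ|² + σ²) and Δ_RI = Σ_{k'=1}^K p^d_{k'} β_{k'} / ( τ p^p_{k'} β_{k'} + σ²/(ρ|Φ|²)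 ) is the residual-interference factor. -/
open Finset Matrix

/-- Under Rayleigh fading, the Theorem-2 ZF SINR (with the matrix
`Ψ + H̄ᴴH̄/M` reduced to the diagonal matrix `Ψ = diag(μ_k β_k)`) factorizes as the
perfect-CSI ZF baseline times `(1 − NMSE_k)` times `1/(1 + Δ_RI)`. -/
theorem stmt_3
    (K M : ℕ) (hK : 1 ≤ K) (hMK : K < M)
    (β μ pd pp : Fin K → ℝ)
    (ρ Φ2 σ2 τ : ℝ)
    (hβ : ∀ k, 0 < β k) (hpd : ∀ k, 0 < pd k) (hpp : ∀ k, 0 < pp k)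
    (hρ : 0 < ρ) (hΦ2 : 0 < Φ2) (hσ2 : 0 < σ2) (hτ : 0 < τ)
    (hμ : ∀ k, μ k = ρ * τ * pp k * β k * Φ2 / (ρ * τ * pp k * β k * Φ2 + σ2))
    (Ψ : Matrix (Fin K) (Fin K) ℝ)
    (hΨ : Ψ = Matrix.diagonal (fun k => μ k * β k))
    (ΔRI : ℝ)
    (hΔRI : ΔRI = ∑ k', pd k' * β k' / (τ * pp k' * β k' + σ2 / (ρ * Φ2)))
    (k : Fin K) :
    ((M : ℝ) - K) * pd k /
      ( ((∑ k', pd k' * β k' * (1 - μ k')) + σ2 / (ρ * Φ2)) * (Ψ⁻¹ k k) )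
    = (((M : ℝ) - K) * pd k * β k / (σ2 / (ρ * Φ2)))
        * (1 - σ2 / (ρ * τ * pp k * β k * Φ2 + σ2))
        * (1 / (1 + ΔRI)) := by
  have hA : ∀ j : Fin K, 0 < ρ * τ * pp j * β j * Φ2 := fun j => by
    have := hpp j; have := hβ j; positivity
  have hAσ : ∀ j : Fin K, 0 < ρ * τ * pp j * β j * Φ2 + σ2 := fun j =>
    by linarith [hA j]
  have hs : 0 < σ2 / (ρ * Φ2) := by positivity
  have hμpos : ∀ j, 0 < μ j := fun j => by
    rw [hμ j]; exact div_pos (hA j) (hAσ j)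
  have hμ1 : ∀ j, 1 - μ j = σ2 / (ρ * τ * pp j * β j * Φ2 + σ2) := fun j => by
    rw [hμ j, eq_div_iff (hAσ j).ne', sub_mul, one_mul,
      div_mul_cancel₀ _ (hAσ j).ne']
    ring
  have hkey : ∀ j : Fin K, τ * pp j * β j + σ2 / (ρ * Φ2)
      = (ρ * τ * pp j * β j * Φ2 + σ2) / (ρ * Φ2) := fun j => by
    rw [eq_div_iff (by positivity : (ρ * Φ2) ≠ 0), add_mul,
      div_mul_cancel₀ _ (by positivity : (ρ * Φ2) ≠ 0)]
    ring
  have hsum : (∑ k', pd k' * β k' * (1 - μ k')) = σ2 / (ρ * Φ2) * ΔRI := by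
    rw [hΔRI, Finset.mul_sum]
    refine Finset.sum_congr rfl fun j _ => ?_
    rw [hμ1 j, hkey j, div_div_eq_mul_div]
    have h1 := (hAσ j).ne'
    have h2 : (ρ * Φ2) ≠ 0 := by positivity
    field_simp
  have hΔpos : 0 ≤ ΔRI := by
    rw [hΔRI]
    refine Finset.sum_nonneg fun j _ => le_of_lt ?_
    refine div_pos (mul_pos (hpd j) (hβ j)) ?_
    have := hpp j; have := hβ j; positivity
  have h1Δ : (0:ℝ) < 1 + ΔRI := by linarith
  have hinv : Ψ⁻¹ k k = (μ k * β k)⁻¹ := by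
    have : Ψ⁻¹ = Matrix.diagonal (fun j => (μ j * β j)⁻¹) := by
      apply Matrix.inv_eq_right_inv
      rw [hΨ, Matrix.diagonal_mul_diagonal]
      convert Matrix.diagonal_one using 2
      funext j
      exact mul_inv_cancel₀ (mul_pos (hμpos j) (hβ j)).ne'
    rw [this, Matrix.diagonal_apply_eq]
  have hμk : (1 : ℝ) - σ2 / (ρ * τ * pp k * β k * Φ2 + σ2) = μ k := by
    rw [← hμ1 k]; ring
  rw [hinv, hsum, hμk, show σ2 / (ρ * Φ2) * ΔRI + σ2 / (ρ * Φ2)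
      = σ2 / (ρ * Φ2) * (1 + ΔRI) by ring]
  have h1 : (σ2 / (ρ * Φ2)) ≠ 0 := hs.ne'
  have h2 : (1 + ΔRI) ≠ 0 := h1Δ.ne'
  have h3 : μ k ≠ 0 := (hμpos k).ne'
  have h4 : β k ≠ 0 := (hβ k).ne'
  field_simp
end

section
/- Fix M, K, fixed vectors h̄_1, …, h̄_K ∈ ℂ^M with ‖h̄_k‖² = M, coefficients β_k > 0, powers p^d_k, p^p_k > 0, ρ, |Φ|², σ², τ > 0. Set all Rician factors equal to δ and let α_k(δ) = β_k/(δ+1), μ_k(δ) = ρ τ p^p_k α_k(δ) |Φ|² / (ρ τ p^p_k α_k(δ)|Φ|² + σ²). Then the Theorem-1 MRC SINR expression SINR_k^MRC(δ) = M p^d_k α_k (μ_k + δ)² / ( Σ_{k'} p^d_{k'} (δ α_{k'} + μ_k β_{k'}) + Σ_{k'≠k} p^d_{k'} (|h̄_k^H h̄_{k'}|²/M) δ² α_{k'} + (σ²/(ρ|Φ|²))(μ_k + δ) ) converges, as δ → ∞, to the pure-LoS value M p^d_k β_k / ( Σ_{k'≠k} p^d_{k'} (|h̄_k^H h̄_{k'}|²/M)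 β_{k'} + σ²/(ρ|Φ|²) ). -/
open Finset Filter

set_option maxHeartbeats 1000000

/-- With a common Rician factor `δ → ∞`, the Theorem-1 MRC SINR
converges to its pure-LoS value. -/
theorem stmt_4
    (K M : ℕ) (hK : 1 ≤ K) (hM : 1 ≤ M)
    (β pd pp : Fin K → ℝ) (hbar : Fin K → Fin M → ℂ)
    (ρ Φ2 σ2 τ : ℝ)
    (hβ : ∀ k, 0 < β k) (hpd : ∀ k, 0 < pd k) (hpp : ∀ k, 0 < pp k)
    (hρ : 0 < ρ) (hΦ2 : 0 < Φ2) (hσ2 : 0 < σ2) (hτ : 0 < τ)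
    (hnorm : ∀ k, ∑ m, ‖hbar k m‖ ^ 2 = M)
    (α : ℝ → Fin K → ℝ) (hα : ∀ δ k, α δ k = β k / (δ + 1))
    (μ : ℝ → Fin K → ℝ)
    (hμ : ∀ δ k, μ δ k = ρ * τ * pp k * α δ k * Φ2 / (ρ * τ * pp k * α δ k * Φ2 + σ2))
    (C : Fin K → Fin K → ℝ)
    (hC : ∀ k k', C k k' = ‖∑ m, (starRingEnd ℂ) (hbar k m) * hbar k' m‖ ^ 2)
    (k : Fin K) :
    Tendsto (fun δ : ℝ =>
        M * pd k * α δ k * (μ δ k + δ) ^ 2 /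
          ( (∑ k', pd k' * (δ * α δ k' + μ δ k * β k'))
            + (∑ k' ∈ univ.erase k, pd k' * (C k k' / M) * δ ^ 2 * α δ k')
            + (σ2 / (ρ * Φ2)) * (μ δ k + δ) ))
      atTop
      (nhds (M * pd k * β k /
        ( (∑ k' ∈ univ.erase k, pd k' * (C k k' / M) * β k') + σ2 / (ρ * Φ2) ))) := by
  have hM0 : (0:ℝ) < (M:ℝ) := by exact_mod_cast hM
  have hinv : Tendsto (fun δ : ℝ => (δ + 1)⁻¹) atTop (nhds 0) :=
    (tendsto_atTop_add_const_right _ 1 tendsto_id).inv_tendsto_atTop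
  -- μ → 0
  have hμ0 : ∀ k', Tendsto (fun δ : ℝ => μ δ k') atTop (nhds 0) := by
    intro k'
    have hx : Tendsto (fun δ : ℝ => ρ * τ * pp k' * α δ k' * Φ2) atTop (nhds 0) := by
      simp only [hα]
      have h := hinv.const_mul (ρ * τ * pp k' * β k' * Φ2)
      rw [mul_zero] at h
      exact h.congr (fun δ => by ring)
    have hden : Tendsto (fun δ : ℝ => ρ * τ * pp k' * α δ k' * Φ2 + σ2) atTop
        (nhds (0 + σ2)) := hx.add_const σ2
    have := hx.div hden (by simpa using hσ2.ne')
    simp only [hμ]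
    simp only [zero_add, zero_div] at this
    exact this
  have hμd : Tendsto (fun δ : ℝ => μ δ k / δ) atTop (nhds 0) := by
    have := (hμ0 k).mul tendsto_inv_atTop_zero
    simpa [div_eq_mul_inv] using this
  have hq : Tendsto (fun δ : ℝ => (δ + 1) / δ ^ 2) atTop (nhds 0) := by
    have hp2 : Tendsto (fun x : ℝ => x ^ 2) atTop atTop :=
      tendsto_pow_atTop two_ne_zero
    have ha : Tendsto (fun δ : ℝ => δ⁻¹ + (δ ^ 2)⁻¹) atTop (nhds 0) := by
      simpa using tendsto_inv_atTop_zero.add hp2.inv_tendsto_atTop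
    refine ha.congr' ?_
    filter_upwards [eventually_gt_atTop (0:ℝ)] with δ hδ
    have hδ0 : δ ≠ 0 := hδ.ne'
    field_simp
  set S : ℝ := ∑ k' ∈ univ.erase k, pd k' * (C k k' / M) * β k' with hS
  -- auxiliary functions
  set A : ℝ → ℝ := fun δ => (M:ℝ) * pd k * β k * (μ δ k / δ + 1) ^ 2 with hAdef
  set Bf : ℝ → ℝ := fun δ =>
      (∑ k', pd k' * (β k' / δ + μ δ k * β k' * ((δ + 1) / δ ^ 2)))
      + S + σ2 / (ρ * Φ2) * ((μ δ k / δ + 1) * (1 + 1 / δ)) with hBdef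
  have hA : Tendsto A atTop (nhds ((M:ℝ) * pd k * β k)) := by
    have := ((hμd.add_const 1).pow 2).const_mul ((M:ℝ) * pd k * β k)
    simpa using this
  have hB : Tendsto Bf atTop (nhds (S + σ2 / (ρ * Φ2))) := by
    have h1 : Tendsto (fun δ : ℝ =>
        ∑ k', pd k' * (β k' / δ + μ δ k * β k' * ((δ + 1) / δ ^ 2))) atTop (nhds 0) := by
      have : Tendsto (fun δ : ℝ =>
          ∑ k', pd k' * (β k' / δ + μ δ k * β k' * ((δ + 1) / δ ^ 2))) atTop
          (nhds (∑ _k' : Fin K, 0)) := by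
        refine tendsto_finset_sum _ (fun k' _ => ?_)
        have ha : Tendsto (fun δ : ℝ => β k' / δ) atTop (nhds 0) := by
          have := tendsto_inv_atTop_zero.const_mul (β k')
          simpa [div_eq_mul_inv] using this
        have hb : Tendsto (fun δ : ℝ => μ δ k * β k' * ((δ + 1) / δ ^ 2)) atTop
            (nhds 0) := by
          have := ((hμ0 k).mul_const (β k')).mul hq
          simpa using this
        have := (ha.add hb).const_mul (pd k')
        simpa using this
      simpa using this
    have h3 : Tendsto (fun δ : ℝ =>
        σ2 / (ρ * Φ2) * ((μ δ k / δ + 1) * (1 + 1 / δ))) atTop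
        (nhds (σ2 / (ρ * Φ2))) := by
      have hone : Tendsto (fun δ : ℝ => 1 + 1 / δ) atTop (nhds (1 + 0)) := by
        simpa [one_div] using (tendsto_inv_atTop_zero (𝕜 := ℝ)).const_add 1
      have := ((hμd.add_const 1).mul hone).const_mul (σ2 / (ρ * Φ2))
      simpa using this
    have h := (h1.add_const S).add h3
    rw [zero_add] at h
    exact h
  have hSnn : 0 ≤ S := by
    refine Finset.sum_nonneg (fun k' _ => ?_)
    have hC0 : 0 ≤ C k k' := by rw [hC]; positivity
    exact mul_nonneg (mul_nonneg (hpd k').le (div_nonneg hC0 hM0.le)) (hβ k').le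
  have hne : S + σ2 / (ρ * Φ2) ≠ 0 := by positivity
  refine Tendsto.congr' ?_ (hA.div hB hne)
  filter_upwards [eventually_ge_atTop (1:ℝ)] with δ hδ
  have hδ0 : (0:ℝ) < δ := lt_of_lt_of_le one_pos hδ
  have hδ0' : δ ≠ 0 := hδ0.ne'
  have hδ1 : δ + 1 ≠ 0 := by positivity
  have hq0 : (δ + 1) / δ ^ 2 ≠ 0 := by positivity
  have hAeq : A δ = ((M:ℝ) * pd k * α δ k * (μ δ k + δ) ^ 2) * ((δ + 1) / δ ^ 2) := by
    simp only [hAdef, hα]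
    field_simp
  have hBeq : Bf δ = ((∑ k', pd k' * (δ * α δ k' + μ δ k * β k'))
      + (∑ k' ∈ univ.erase k, pd k' * (C k k' / M) * δ ^ 2 * α δ k')
      + σ2 / (ρ * Φ2) * (μ δ k + δ)) * ((δ + 1) / δ ^ 2) := by
    simp only [hBdef, hS, add_mul, Finset.sum_mul]
    congr 1
    · congr 1
      · refine Finset.sum_congr rfl (fun k' _ => ?_)
        rw [hα]
        field_simp
      · refine Finset.sum_congr rfl (fun k' _ => ?_)
        rw [hα]
        field_simp
    · field_simp
  show A δ / Bf δ = _
  rw [hAeq, hBeq, mul_div_mul_right _ _ hq0]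
end

section
/- (Power-scaling law, Rayleigh, MRC.) Fix K ≥ 1, β_1, …, β_K > 0, E > 0, ρ > 0, |Φ|² > 0, σ² > 0, and an exponent ε_d ∈ (0,1); set ε_p = 1 − ε_d. For each number of elements M, let the data power be p^d(M) = E/M^{ε_d} and the pilot energy be τ p^p(M) = E/M^{ε_p}, and define μ_k(M) = ρ (E/M^{ε_p}) β_k |Φ|² / ( ρ (E/M^{ε_p}) β_k |Φ|² + σ² ) and SINR_k^MRC(M) = M p^d(M) β_k μ_k(M) / ( Σ_{k'=1}^K p^d(M) β_{k'} + σ²/(ρ|Φ|²) ). Then lim_{M → ∞} SINR_k^MRC(M) = ρ² |Φ|⁴ β_k² E² / σ⁴. -/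
open Finset Filter

/-- Power-scaling law for MRC under Rayleigh fading: with
`p^d = E/M^{ε_d}` and `τ p^p = E/M^{ε_p}`, `ε_d + ε_p = 1`, the MRC SINR of user `k`
tends to `ρ²|Φ|⁴ β_k² E² / σ⁴` as `M → ∞`. -/
theorem stmt_6
    (K : ℕ) (hK : 1 ≤ K)
    (β : Fin K → ℝ) (E ρ Φ2 σ2 εd εp : ℝ)
    (hβ : ∀ k, 0 < β k) (hE : 0 < E) (hρ : 0 < ρ) (hΦ2 : 0 < Φ2) (hσ2 : 0 < σ2)
    (hεd : εd ∈ Set.Ioo (0 : ℝ) 1) (hεp : εp = 1 - εd)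
    (pd : ℕ → ℝ) (hpd : ∀ M, pd M = E / (M : ℝ) ^ εd)
    (μ : ℕ → Fin K → ℝ)
    (hμ : ∀ M k, μ M k = ρ * (E / (M : ℝ) ^ εp) * β k * Φ2
        / (ρ * (E / (M : ℝ) ^ εp) * β k * Φ2 + σ2))
    (k : Fin K) :
    Tendsto (fun M : ℕ =>
        (M : ℝ) * pd M * β k * μ M k / ((∑ k', pd M * β k') + σ2 / (ρ * Φ2)))
      atTop
      (nhds (ρ ^ 2 * Φ2 ^ 2 * β k ^ 2 * E ^ 2 / σ2 ^ 2)) := by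
  obtain ⟨hεd0, hεd1⟩ := hεd
  have hβk := hβ k
  set c : ℝ := ρ * E * β k * Φ2 with hc
  have hcpos : 0 < c := by positivity
  have hεp0 : 0 < εp := by rw [hεp]; linarith
  have hnat : Tendsto (fun M : ℕ => (M : ℝ)) atTop atTop :=
    tendsto_natCast_atTop_atTop
  have h1 : Tendsto (fun M : ℕ => (M : ℝ) ^ εp) atTop atTop :=
    (tendsto_rpow_atTop hεp0).comp hnat
  have h1d : Tendsto (fun M : ℕ => (M : ℝ) ^ εd) atTop atTop :=
    (tendsto_rpow_atTop hεd0).comp hnat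
  have h2 : Tendsto (fun M : ℕ => c / (M : ℝ) ^ εp) atTop (nhds 0) :=
    tendsto_const_nhds.div_atTop h1
  have hN : Tendsto (fun M : ℕ => E * β k * c / (c / (M : ℝ) ^ εp + σ2)) atTop
      (nhds (E * β k * c / σ2)) := by
    have hden : Tendsto (fun M : ℕ => c / (M : ℝ) ^ εp + σ2) atTop (nhds (0 + σ2)) :=
      h2.add tendsto_const_nhds
    have := ((tendsto_const_nhds :
        Tendsto (fun _ : ℕ => E * β k * c) atTop (nhds (E * β k * c))).div hden
      (by positivity : (0 : ℝ) + σ2 ≠ 0))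
    simp only [zero_add] at this
    exact this
  have hD : Tendsto (fun M : ℕ => (∑ k', (E / (M : ℝ) ^ εd) * β k') + σ2 / (ρ * Φ2))
      atTop (nhds (σ2 / (ρ * Φ2))) := by
    have hsum : Tendsto (fun M : ℕ => ∑ k', (E / (M : ℝ) ^ εd) * β k') atTop
        (nhds (∑ k' : Fin K, (0 : ℝ))) := by
      refine tendsto_finset_sum _ fun k' _ => ?_
      simpa using (tendsto_const_nhds.div_atTop h1d).mul_const (β k')
    simpa using hsum.add tendsto_const_nhds
  have hDne : (σ2 / (ρ * Φ2)) ≠ 0 := by positivity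
  have hlim := hN.div hD hDne
  have hval : (E * β k * c / σ2) / (σ2 / (ρ * Φ2))
      = ρ ^ 2 * Φ2 ^ 2 * β k ^ 2 * E ^ 2 / σ2 ^ 2 := by
    rw [hc]; field_simp
  rw [hval] at hlim
  refine hlim.congr' ?_
  filter_upwards [eventually_ge_atTop 1] with M hM
  have hMpos : (0 : ℝ) < (M : ℝ) := by exact_mod_cast hM
  have hMp : (0 : ℝ) < (M : ℝ) ^ εp := Real.rpow_pos_of_pos hMpos _
  have hMd : (0 : ℝ) < (M : ℝ) ^ εd := Real.rpow_pos_of_pos hMpos _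
  have hsplit : (M : ℝ) ^ εd * (M : ℝ) ^ εp = (M : ℝ) := by
    rw [← Real.rpow_add hMpos, hεp]
    norm_num
  have hμden : 0 < c / (M : ℝ) ^ εp + σ2 := by positivity
  have hμeq : ρ * (E / (M : ℝ) ^ εp) * β k * Φ2 = c / (M : ℝ) ^ εp := by
    rw [hc]; ring
  rw [hμ, hpd, hμeq]
  simp only [Pi.div_apply]
  congr 1
  field_simp
  ring_nf
  linear_combination hsplit
end

section
/- (Power-scaling law, Rayleigh, ZF.) Fix K ≥ 1, β_1, …, β_K > 0, E > 0, ρ > 0, |Φ|² > 0, σ² > 0, and an exponent ε_d ∈ (0,1); set ε_p = 1 − ε_d. For each M > K, let p^d(M) = E/M^{ε_d}, τ p^p(M) = E/M^{ε_p}, μ_k(M) = ρ (E/M^{ε_p}) β_k |Φ|² / ( ρ (E/M^{ε_p}) β_k |Φ|² + σ² ), and SINR_k^ZF(M) = (M−K) p^d(M) β_k μ_k(M) / ( Σ_{k'=1}^K p^d(M) β_{k'} (1 − μ_{k'}(M)) + σ²/(ρ|Φ|²) ). Then lim_{M → ∞} SINR_k^ZF(M) = ρ² |Φ|⁴ β_k²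 E² / σ⁴. -/
open Finset Filter

/-- Power-scaling law for ZF under Rayleigh fading: with
`p^d = E/M^{ε_d}` and `τ p^p = E/M^{ε_p}`, `ε_d + ε_p = 1`, the ZF SINR of user `k`
tends to `ρ²|Φ|⁴ β_k² E² / σ⁴` as `M → ∞`. -/
theorem stmt_7
    (K : ℕ) (hK : 1 ≤ K)
    (β : Fin K → ℝ) (E ρ Φ2 σ2 εd εp : ℝ)
    (hβ : ∀ k, 0 < β k) (hE : 0 < E) (hρ : 0 < ρ) (hΦ2 : 0 < Φ2) (hσ2 : 0 < σ2)
    (hεd : εd ∈ Set.Ioo (0 : ℝ) 1) (hεp : εp = 1 - εd)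
    (pd : ℕ → ℝ) (hpd : ∀ M, pd M = E / (M : ℝ) ^ εd)
    (μ : ℕ → Fin K → ℝ)
    (hμ : ∀ M k, μ M k = ρ * (E / (M : ℝ) ^ εp) * β k * Φ2
        / (ρ * (E / (M : ℝ) ^ εp) * β k * Φ2 + σ2))
    (k : Fin K) :
    Tendsto (fun M : ℕ =>
        ((M : ℝ) - K) * pd M * β k * μ M k /
          ((∑ k', pd M * β k' * (1 - μ M k')) + σ2 / (ρ * Φ2)))
      atTop
      (nhds (ρ ^ 2 * Φ2 ^ 2 * β k ^ 2 * E ^ 2 / σ2 ^ 2)) := by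
  obtain ⟨hεd0, hεd1⟩ := hεd
  have hεp0 : 0 < εp := by rw [hεp]; linarith
  have hNat : Tendsto (fun M : ℕ => (M : ℝ)) atTop atTop := tendsto_natCast_atTop_atTop
  have hMp : Tendsto (fun M : ℕ => (M : ℝ) ^ εp) atTop atTop :=
    (tendsto_rpow_atTop hεp0).comp hNat
  have hMd : Tendsto (fun M : ℕ => (M : ℝ) ^ εd) atTop atTop :=
    (tendsto_rpow_atTop hεd0).comp hNat
  have hpd0 : Tendsto (fun M => pd M) atTop (nhds 0) := by
    simp only [hpd]
    exact tendsto_const_nhds.div_atTop hMd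
  have hμ0 : ∀ k', Tendsto (fun M => μ M k') atTop (nhds 0) := by
    intro k'
    have h1 : Tendsto (fun M : ℕ => E / (M : ℝ) ^ εp) atTop (nhds 0) :=
      tendsto_const_nhds.div_atTop hMp
    have hf : Tendsto (fun M : ℕ => ρ * (E / (M : ℝ) ^ εp) * β k' * Φ2) atTop (nhds 0) := by
      have := ((h1.const_mul ρ).mul_const (β k')).mul_const Φ2
      simpa using this
    simp only [hμ]
    have := hf.div (hf.add tendsto_const_nhds) (by simpa using hσ2.ne')
    simpa [Pi.div_def] using this
  have hden : Tendsto (fun M => (∑ k', pd M * β k' * (1 - μ M k')) + σ2 / (ρ * Φ2))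
      atTop (nhds (σ2 / (ρ * Φ2))) := by
    have hsum : Tendsto (fun M => ∑ k', pd M * β k' * (1 - μ M k')) atTop (nhds 0) := by
      have : Tendsto (fun M => ∑ k', pd M * β k' * (1 - μ M k')) atTop
          (nhds (∑ k' : Fin K, 0)) := by
        refine tendsto_finset_sum _ (fun k' _ => ?_)
        have h1 : Tendsto (fun M : ℕ => (1 : ℝ) - μ M k') atTop (nhds (1 - 0)) :=
          tendsto_const_nhds.sub (hμ0 k')
        have := (hpd0.mul_const (β k')).mul h1
        simpa using this
      simpa using this
    simpa using hsum.add tendsto_const_nhds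
  have ha0 : 0 < ρ * E * β k * Φ2 := by have := hβ k; positivity
  have hnum : Tendsto (fun M : ℕ => ((M : ℝ) - K) * pd M * β k * μ M k) atTop
      (nhds (E * β k * (ρ * E * β k * Φ2) / σ2)) := by
    have hg : Tendsto (fun M : ℕ =>
        E * β k * (ρ * E * β k * Φ2) * (1 - (K : ℝ) / (M : ℝ)) /
          ((ρ * E * β k * Φ2) / (M : ℝ) ^ εp + σ2)) atTop
        (nhds (E * β k * (ρ * E * β k * Φ2) / σ2)) := by
      have h1 : Tendsto (fun M : ℕ => (K : ℝ) / (M : ℝ)) atTop (nhds 0) :=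
        tendsto_const_nhds.div_atTop hNat
      have h2 : Tendsto (fun M : ℕ => (ρ * E * β k * Φ2) / (M : ℝ) ^ εp) atTop (nhds 0) :=
        tendsto_const_nhds.div_atTop hMp
      have h3 : Tendsto (fun M : ℕ => (1 : ℝ) - (K : ℝ) / (M : ℝ)) atTop (nhds (1 - 0)) :=
        tendsto_const_nhds.sub h1
      have := (h3.const_mul (E * β k * (ρ * E * β k * Φ2))).div
        (h2.add tendsto_const_nhds) (by simpa using hσ2.ne')
      simpa [mul_comm, Pi.div_def] using this
    refine hg.congr' ?_
    filter_upwards [eventually_ge_atTop 1] with M hM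
    have hM0 : (0 : ℝ) < (M : ℝ) := by exact_mod_cast hM
    have hP : (0 : ℝ) < (M : ℝ) ^ εp := Real.rpow_pos_of_pos hM0 _
    have hQ : (0 : ℝ) < (M : ℝ) ^ εd := Real.rpow_pos_of_pos hM0 _
    have key : (M : ℝ) ^ εd * (M : ℝ) ^ εp = (M : ℝ) := by
      rw [← Real.rpow_add hM0, hεp]
      norm_num
    have hβk := hβ k
    have hD : ρ * (E / (M : ℝ) ^ εp) * β k * Φ2 + σ2 ≠ 0 := by positivity
    have hD2 : (ρ * E * β k * Φ2) / (M : ℝ) ^ εp + σ2 ≠ 0 := by positivity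
    rw [hpd, hμ]
    field_simp
    linear_combination ((M : ℝ) - K) * key
  have hne : σ2 / (ρ * Φ2) ≠ 0 := by positivity
  have := hnum.div hden hne
  rw [Pi.div_def] at this
  convert this using 2
  field_simp
end

section
/- (Power-scaling law, Rician, MRC.) Fix K ≥ 1, Rician factors δ_k > 0, coefficients β_k > 0, E > 0, ρ > 0, |Φ|² > 0, σ² > 0, an exponent ε_p ∈ (0,1), and spatial frequencies x_1, …, x_K ∈ ℝ that are pairwise distinct modulo 2π. For each M, let h̄_k(M) = (e^{-i m x_k})_{m=0}^{M−1} ∈ ℂ^M, p^d(M) = E/M, τ p^p(M) = E/M^{ε_p}, α_k = β_k/(δ_k+1), μ_k(M) = ρ (E/M^{ε_p}) α_k |Φ|² / ( ρ (E/M^{ε_p}) α_k |Φ|² + σ² ), and SINR_k^MRC(M) = M p^d(M) α_k (μ_k(M) + δ_k)² / ( Σ_{k'=1}^K p^d(M) (δ_k α_{k'} + μ_k(M) β_{k'}) + Σ_{k'≠k} p^d(M) (|h̄_k(M)^H h̄_{k'}(M)|²/M) δ_k δ_{k'} α_{k'} + (σ²/(ρ|Φ|²)) (μ_k(M) + δ_k)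 ). Then lim_{M → ∞} SINR_k^MRC(M) = ρ |Φ|² δ_k β_k E / ((δ_k + 1) σ²). -/
open Finset Filter Real

lemma geom_bound (Δ : ℝ) (h : ∀ n : ℤ, Δ ≠ 2 * π * n) :
    ∃ B : ℝ, 0 ≤ B ∧ ∀ M : ℕ,
      ‖∑ m ∈ Finset.range M, Complex.exp ((m : ℂ) * (Δ : ℂ) * Complex.I)‖ ≤ B := by
  set r : ℂ := Complex.exp ((Δ : ℂ) * Complex.I) with hr
  have hr1 : r ≠ 1 := by
    rw [hr, Ne, Complex.exp_eq_one_iff]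
    rintro ⟨n, hn⟩
    apply h n
    have h2 : (Δ : ℂ) * Complex.I = (((2 * π * n : ℝ)) : ℂ) * Complex.I := by
      rw [hn]; push_cast; ring
    have := mul_right_cancel₀ Complex.I_ne_zero h2
    exact_mod_cast this
  refine ⟨2 / ‖r - 1‖, by positivity, fun M => ?_⟩
  have habs : ‖r‖ = 1 := by
    rw [hr, Complex.norm_exp]
    simp
  have hsum : ∑ m ∈ Finset.range M, Complex.exp ((m : ℂ) * (Δ : ℂ) * Complex.I)
      = (r ^ M - 1) / (r - 1) := by
    rw [← geom_sum_eq hr1]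
    refine Finset.sum_congr rfl fun m _ => ?_
    rw [hr, ← Complex.exp_nat_mul]
    ring_nf
  rw [hsum, norm_div]
  gcongr
  calc ‖r ^ M - 1‖ ≤ ‖r ^ M‖ + ‖(1 : ℂ)‖ :=
          norm_sub_le _ _
      _ = 2 := by rw [norm_pow, habs]; simp; norm_num

/-- Power-scaling law for MRC under Rician fading with ULA steering
vectors `h̄_k(M) = (e^{-i m x_k})_{m<M}`: with `p^d = E/M` and `τ p^p = E/M^{ε_p}`,
the Theorem-1 MRC SINR of user `k` tends to `ρ|Φ|² δ_k β_k E/((δ_k+1)σ²)`. -/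
theorem stmt_8
    (K : ℕ) (hK : 1 ≤ K)
    (δ β α : Fin K → ℝ) (x : Fin K → ℝ) (E ρ Φ2 σ2 εp : ℝ)
    (hδ : ∀ k, 0 < δ k) (hβ : ∀ k, 0 < β k) (hE : 0 < E)
    (hρ : 0 < ρ) (hΦ2 : 0 < Φ2) (hσ2 : 0 < σ2)
    (hεp : εp ∈ Set.Ioo (0 : ℝ) 1)
    (hx : ∀ k k', k ≠ k' → ∀ n : ℤ, x k - x k' ≠ 2 * π * n)
    (hα : ∀ k, α k = β k / (δ k + 1))
    (hbar : (M : ℕ) → Fin K → Fin M → ℂ)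
    (hhbar : ∀ (M : ℕ) (k : Fin K) (m : Fin M),
      hbar M k m = Complex.exp (-(((m : ℕ) : ℝ) : ℂ) * (x k : ℂ) * Complex.I))
    (pd : ℕ → ℝ) (hpd : ∀ M, pd M = E / (M : ℝ))
    (μ : ℕ → Fin K → ℝ)
    (hμ : ∀ M k, μ M k = ρ * (E / (M : ℝ) ^ εp) * α k * Φ2
        / (ρ * (E / (M : ℝ) ^ εp) * α k * Φ2 + σ2))
    (k : Fin K) :
    Tendsto (fun M : ℕ =>
        (M : ℝ) * pd M * α k * (μ M k + δ k) ^ 2 /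
          ( (∑ k', pd M * (δ k * α k' + μ M k * β k'))
            + (∑ k' ∈ univ.erase k, pd M *
                (‖∑ m, (starRingEnd ℂ) (hbar M k m) * hbar M k' m‖ ^ 2 / M)
                * δ k * δ k' * α k')
            + (σ2 / (ρ * Φ2)) * (μ M k + δ k) ))
      atTop
      (nhds (ρ * Φ2 * δ k * β k * E / ((δ k + 1) * σ2))) := by
  obtain ⟨hεp0, hεp1⟩ := hεp
  have hαpos : ∀ j, 0 < α j := fun j => by
    rw [hα]; have := hδ j; have := hβ j; positivity
  have hpdnn : ∀ M, 0 ≤ pd M := fun M => by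
    rw [hpd]; positivity
  -- pd → 0
  have hpd0 : Tendsto (fun M => pd M) atTop (nhds 0) := by
    have := tendsto_const_div_atTop_nhds_zero_nat E
    simpa [hpd] using this
  -- μ → 0
  have hM0 : Tendsto (fun M : ℕ => E / (M : ℝ) ^ εp) atTop (nhds 0) :=
    Tendsto.div_atTop tendsto_const_nhds
      ((tendsto_rpow_atTop hεp0).comp tendsto_natCast_atTop_atTop)
  have hμ0 : Tendsto (fun M => μ M k) atTop (nhds 0) := by
    have ht : Tendsto (fun M : ℕ => ρ * (E / (M : ℝ) ^ εp) * α k * Φ2) atTop (nhds 0) := by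
      have := ((hM0.const_mul ρ).mul_const (α k)).mul_const Φ2
      simpa using this
    have h2 : Tendsto (fun M : ℕ => ρ * (E / (M : ℝ) ^ εp) * α k * Φ2
        / (ρ * (E / (M : ℝ) ^ εp) * α k * Φ2 + σ2)) atTop (nhds (0 / (0 + σ2))) :=
      ht.div (ht.add tendsto_const_nhds) (by simp [hσ2.ne'])
    rw [show (0:ℝ)/(0+σ2) = 0 by simp] at h2
    exact Tendsto.congr (fun M => (hμ M k).symm) h2
  -- numerator
  have hnum : Tendsto (fun M : ℕ => (M : ℝ) * pd M * α k * (μ M k + δ k) ^ 2) atTop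
      (nhds (E * α k * δ k ^ 2)) := by
    have h2 : Tendsto (fun M : ℕ => E * α k * (μ M k + δ k) ^ 2) atTop
        (nhds (E * α k * δ k ^ 2)) := by
      have := ((hμ0.add_const (δ k)).pow 2).const_mul (E * α k)
      simpa [mul_assoc] using this
    refine h2.congr' ?_
    filter_upwards [eventually_ge_atTop 1] with M hM
    have hMne : (M : ℝ) ≠ 0 := Nat.cast_ne_zero.mpr (by omega)
    rw [hpd]; field_simp
  -- first denominator sum → 0
  have hd1 : Tendsto (fun M => ∑ k', pd M * (δ k * α k' + μ M k * β k')) atTop (nhds 0) := by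
    have h := tendsto_finset_sum (univ : Finset (Fin K)) (fun k' _ =>
      (hpd0.mul (tendsto_const_nhds.add (hμ0.mul_const (β k')))) :
      ∀ k' ∈ univ, Tendsto (fun M => pd M * (δ k * α k' + μ M k * β k')) atTop
        (nhds (0 * (δ k * α k' + 0 * β k'))))
    simpa using h
  -- second denominator sum → 0
  have hd2 : Tendsto (fun M : ℕ => ∑ k' ∈ univ.erase k, pd M *
      (‖∑ m, (starRingEnd ℂ) (hbar M k m) * hbar M k' m‖ ^ 2 / M)
      * δ k * δ k' * α k') atTop (nhds 0) := by
    have h := tendsto_finset_sum (univ.erase k) (fun k' hk' => ?_ :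
      ∀ k' ∈ univ.erase k, Tendsto (fun M : ℕ => pd M *
        (‖∑ m, (starRingEnd ℂ) (hbar M k m) * hbar M k' m‖ ^ 2 / M)
        * δ k * δ k' * α k') atTop (nhds 0))
    · simpa using h
    · have hkk' : k ≠ k' := (Finset.ne_of_mem_erase hk').symm
      obtain ⟨B, hB0, hB⟩ := geom_bound (x k - x k') (hx k k' hkk')
      have hSeq : ∀ M : ℕ, (∑ m, (starRingEnd ℂ) (hbar M k m) * hbar M k' m)
          = ∑ m ∈ Finset.range M, Complex.exp ((m : ℂ) * ((x k - x k' : ℝ) : ℂ) * Complex.I) := by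
        intro M
        rw [← Fin.sum_univ_eq_sum_range
          (fun m : ℕ => Complex.exp ((m : ℂ) * ((x k - x k' : ℝ) : ℂ) * Complex.I))]
        refine Finset.sum_congr rfl fun m _ => ?_
        rw [hhbar, hhbar, ← Complex.exp_conj, ← Complex.exp_add]
        congr 1
        simp only [map_mul, map_neg, Complex.conj_ofReal, Complex.conj_I]
        push_cast
        ring
      refine squeeze_zero' ?_ ?_ (show Tendsto
        (fun M : ℕ => pd M * B ^ 2 * δ k * δ k' * α k') atTop (nhds 0) from ?_)
      · filter_upwards with M
        have := hδ k; have := hδ k'; have := hαpos k'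
        have h1 : (0:ℝ) ≤ ‖∑ m, (starRingEnd ℂ) (hbar M k m) * hbar M k' m‖ ^ 2 / M := by
          positivity
        have := hpdnn M
        positivity
      · filter_upwards [eventually_ge_atTop 1] with M hM
        have hM1 : (1:ℝ) ≤ (M : ℝ) := by exact_mod_cast hM
        have habs : ‖∑ m, (starRingEnd ℂ) (hbar M k m) * hbar M k' m‖ ≤ B := by
          rw [hSeq]; exact hB M
        have h1 : ‖∑ m, (starRingEnd ℂ) (hbar M k m) * hbar M k' m‖ ^ 2 / M
            ≤ B ^ 2 := by
          rw [div_le_iff₀ (by linarith)]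
          calc ‖∑ m, (starRingEnd ℂ) (hbar M k m) * hbar M k' m‖ ^ 2
              ≤ B ^ 2 := by gcongr <;> exact norm_nonneg _
            _ ≤ B ^ 2 * M := le_mul_of_one_le_right (by positivity) hM1
        have := hδ k; have := hδ k'; have := hαpos k'; have := hpdnn M
        gcongr
      · have := (((hpd0.mul_const (B ^ 2)).mul_const (δ k)).mul_const (δ k')).mul_const (α k')
        simpa using this
  -- third denominator term
  have hd3 : Tendsto (fun M => (σ2 / (ρ * Φ2)) * (μ M k + δ k)) atTop
      (nhds ((σ2 / (ρ * Φ2)) * δ k)) := by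
    have := (hμ0.add_const (δ k)).const_mul (σ2 / (ρ * Φ2))
    simpa using this
  have hden := (hd1.add hd2).add hd3
  rw [show (0:ℝ) + 0 + (σ2 / (ρ * Φ2)) * δ k = (σ2 / (ρ * Φ2)) * δ k by ring] at hden
  have hdne : (σ2 / (ρ * Φ2)) * δ k ≠ 0 := by
    have := hδ k; positivity
  have hfinal := hnum.div hden hdne
  have hval : E * α k * δ k ^ 2 / ((σ2 / (ρ * Φ2)) * δ k)
      = ρ * Φ2 * δ k * β k * E / ((δ k + 1) * σ2) := by
    rw [hα k]
    have h1 := hδ k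
    have h2 : δ k + 1 ≠ 0 := by linarith
    field_simp
  rw [← hval]
  exact hfinal
end

section
/- (High-power regime, Rayleigh, MRC: vanishing gain.) With equal pilot and data power p^d_k = p^p_k = p for all users, define for each p > 0 the Rayleigh MRC SINRs SINR^MRC(p) = M p β_k μ_k(p) / ( Σ_{k'} p β_{k'} + σ²/(ρ|Φ|²) ) with μ_k(p) = ρ τ p β_k |Φ|²/(ρ τ p β_k |Φ|² + σ²) for the atomic receiver, and SINR_RF^MRC(p) = M p β_k μ_{k,RF}(p) / ( Σ_{k'} p β_{k'} + σ_RF²/ρ_RF ) with μ_{k,RF}(p) = ρ_RF τ p β_k/(ρ_RF τ p β_k + σ_RF²) for the RF receiver. Then the achievable-rate difference ΔR(p) = ((T−τ)/T) [ log₂(1 + SINR^MRC(p)) − log₂(1 + SINR_RF^MRC(p)) ] satisfies lim_{p → ∞} ΔR(p) = 0. -/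
open Finset Filter

private lemma aux_ratio (a d : ℝ) (ha : 0 < a) (hd : 0 < d) :
    Tendsto (fun p : ℝ => a * p / (a * p + d)) atTop (nhds 1) := by
  have hden : Tendsto (fun p : ℝ => a * p + d) atTop atTop :=
    tendsto_atTop_add_const_right _ d (tendsto_id.const_mul_atTop ha)
  have h0 : Tendsto (fun p : ℝ => d / (a * p + d)) atTop (nhds 0) :=
    Tendsto.div_atTop tendsto_const_nhds hden
  have h1 : Tendsto (fun p : ℝ => 1 - d / (a * p + d)) atTop (nhds 1) := by
    simpa using tendsto_const_nhds.sub h0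
  refine h1.congr' ?_
  filter_upwards [hden.eventually_gt_atTop 0] with p hp
  field_simp
  ring

/-- High-power regime, Rayleigh fading, MRC: the achievable-rate
difference between the atomic and RF receivers vanishes as `p → ∞`. -/
theorem stmt_10
    (K M : ℕ) (hK : 1 ≤ K) (hM : 1 ≤ M)
    (β : Fin K → ℝ) (ρ Φ2 σ2 ρRF σRF2 τ T : ℝ)
    (hβ : ∀ k, 0 < β k) (hρ : 0 < ρ) (hΦ2 : 0 < Φ2) (hσ2 : 0 < σ2)
    (hρRF : 0 < ρRF) (hσRF2 : 0 < σRF2) (hτ : 0 < τ) (hT : τ < T)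
    (μ μRF : ℝ → Fin K → ℝ)
    (hμ : ∀ p k, μ p k = ρ * τ * p * β k * Φ2 / (ρ * τ * p * β k * Φ2 + σ2))
    (hμRF : ∀ p k, μRF p k = ρRF * τ * p * β k / (ρRF * τ * p * β k + σRF2))
    (S SRF ΔR : ℝ → ℝ) (k : Fin K)
    (hS : ∀ p, S p = (M : ℝ) * p * β k * μ p k / ((∑ k', p * β k') + σ2 / (ρ * Φ2)))
    (hSRF : ∀ p, SRF p = (M : ℝ) * p * β k * μRF p k / ((∑ k', p * β k') + σRF2 / ρRF))
    (hΔR : ∀ p, ΔR p = ((T - τ) / T) * (Real.logb 2 (1 + S p) - Real.logb 2 (1 + SRF p))) :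
    Tendsto ΔR atTop (nhds 0) := by
  haveI : Nonempty (Fin K) := ⟨⟨0, hK⟩⟩
  set B : ℝ := ∑ k', β k' with hB
  have hBpos : 0 < B := Finset.sum_pos (fun i _ => hβ i) Finset.univ_nonempty
  have hsum : ∀ p : ℝ, (∑ k', p * β k') = p * B := fun p => by
    simp [hB, Finset.mul_sum]
  set L : ℝ := (M : ℝ) * β k / B with hL
  -- limits of μ
  have hμt : Tendsto (fun p => μ p k) atTop (nhds 1) := by
    refine (aux_ratio (ρ * τ * β k * Φ2) σ2 (mul_pos (mul_pos (mul_pos hρ hτ) (hβ k)) hΦ2) hσ2).congr fun p => ?_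
    rw [hμ]; ring_nf
  have hμRFt : Tendsto (fun p => μRF p k) atTop (nhds 1) := by
    refine (aux_ratio (ρRF * τ * β k) σRF2 (mul_pos (mul_pos hρRF hτ) (hβ k)) hσRF2).congr fun p => ?_
    rw [hμRF]; ring_nf
  -- general SINR limit
  have key : ∀ (c : ℝ) (ν : ℝ → ℝ) (W : ℝ → ℝ), 0 < c →
      Tendsto ν atTop (nhds 1) →
      (∀ p, W p = (M : ℝ) * p * β k * ν p / (p * B + c)) →
      Tendsto W atTop (nhds L) := by
    intro c ν W hc hν hW
    have hden : Tendsto (fun p : ℝ => B + c / p) atTop (nhds B) := by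
      have h0 : Tendsto (fun p : ℝ => c / p) atTop (nhds 0) :=
        Tendsto.div_atTop tendsto_const_nhds tendsto_id
      simpa using tendsto_const_nhds.add h0
    have hnum : Tendsto (fun p => (M : ℝ) * β k * ν p) atTop (nhds ((M : ℝ) * β k)) := by
      simpa using tendsto_const_nhds.mul hν
    have := hnum.div hden hBpos.ne'
    refine this.congr' ?_
    filter_upwards [eventually_gt_atTop 0] with p hp
    simp only [Pi.div_apply]
    rw [hW]
    rw [div_eq_div_iff (add_pos hBpos (div_pos hc hp)).ne' (add_pos (mul_pos hp hBpos) hc).ne']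
    field_simp
  have hSt : Tendsto S atTop (nhds L) :=
    key (σ2 / (ρ * Φ2)) (fun p => μ p k) S (div_pos hσ2 (mul_pos hρ hΦ2)) hμt
      (fun p => by rw [hS, hsum])
  have hSRFt : Tendsto SRF atTop (nhds L) :=
    key (σRF2 / ρRF) (fun p => μRF p k) SRF (div_pos hσRF2 hρRF) hμRFt
      (fun p => by rw [hSRF, hsum])
  have hLpos : 0 < 1 + L := by
    have : 0 < L := by
      have hM' : (0:ℝ) < (M:ℝ) := by exact_mod_cast Nat.lt_of_lt_of_le Nat.zero_lt_one hM
      exact div_pos (mul_pos hM' (hβ k)) hBpos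
    linarith
  have hlog : ∀ (W : ℝ → ℝ), Tendsto W atTop (nhds L) →
      Tendsto (fun p => Real.logb 2 (1 + W p)) atTop (nhds (Real.logb 2 (1 + L))) := by
    intro W hW
    have h1 : Tendsto (fun p => 1 + W p) atTop (nhds (1 + L)) :=
      tendsto_const_nhds.add hW
    have h2 : Tendsto (fun p => Real.log (1 + W p)) atTop (nhds (Real.log (1 + L))) :=
      (Real.continuousAt_log hLpos.ne').tendsto.comp h1
    simpa [Real.logb, div_eq_mul_inv] using h2.mul tendsto_const_nhds
  have hfin : Tendsto (fun p => ((T - τ) / T) *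
      (Real.logb 2 (1 + S p) - Real.logb 2 (1 + SRF p))) atTop (nhds 0) := by
    have := (tendsto_const_nhds : Tendsto (fun _ : ℝ => (T - τ) / T) atTop
      (nhds ((T - τ) / T))).mul ((hlog S hSt).sub (hlog SRF hSRFt))
    simpa using this
  exact hfin.congr fun p => (hΔR p).symm
end

section
/- (Squaring effect, Rayleigh, MRC.) With equal pilot and data power p^d_k = p^p_k = p for all users, define the Rayleigh MRC SINRs SINR^MRC(p) = M p β_k μ_k(p) / ( Σ_{k'} p β_{k'} + σ²/(ρ|Φ|²) ) with μ_k(p) = ρ τ p β_k |Φ|²/(ρ τ p β_k |Φ|² + σ²) for the atomic receiver, and SINR_RF^MRC(p) analogously with (ρ_RF, 1, σ_RF²). Then lim_{p → 0⁺} SINR^MRC(p) / SINR_RF^MRC(p) = κ², where κ = (ρ|Φ|²/σ²)/(ρ_RF/σ_RF²); i.e., in the low-power regime the SINR gain of the atomic receiver over the RF receiver is the square of the normalized-noise ratio. -/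
open Finset Filter

/-- Squaring effect, Rayleigh fading, MRC: in the low-power regime
the SINR gain of the atomic receiver over the RF receiver tends to `κ²`, where
`κ = (ρ|Φ|²/σ²)/(ρ_RF/σ_RF²)`. -/
theorem stmt_12
    (K M : ℕ) (hK : 1 ≤ K) (hM : 1 ≤ M)
    (β : Fin K → ℝ) (ρ Φ2 σ2 ρRF σRF2 τ κ : ℝ)
    (hβ : ∀ k, 0 < β k) (hρ : 0 < ρ) (hΦ2 : 0 < Φ2) (hσ2 : 0 < σ2)
    (hρRF : 0 < ρRF) (hσRF2 : 0 < σRF2) (hτ : 0 < τ)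
    (hκ : κ = (ρ * Φ2 / σ2) / (ρRF / σRF2))
    (μ μRF : ℝ → Fin K → ℝ)
    (hμ : ∀ p k, μ p k = ρ * τ * p * β k * Φ2 / (ρ * τ * p * β k * Φ2 + σ2))
    (hμRF : ∀ p k, μRF p k = ρRF * τ * p * β k / (ρRF * τ * p * β k + σRF2))
    (S SRF : ℝ → ℝ) (k : Fin K)
    (hS : ∀ p, S p = (M : ℝ) * p * β k * μ p k / ((∑ k', p * β k') + σ2 / (ρ * Φ2)))
    (hSRF : ∀ p, SRF p = (M : ℝ) * p * β k * μRF p k / ((∑ k', p * β k') + σRF2 / ρRF)) :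
    Tendsto (fun p => S p / SRF p) (nhdsWithin 0 (Set.Ioi 0)) (nhds (κ ^ 2)) := by
  set B : ℝ := ∑ k', β k' with hB
  have hBpos : 0 < B := Finset.sum_pos (fun i _ => hβ i) ⟨k, Finset.mem_univ k⟩
  set f : ℝ → ℝ := fun p =>
    (ρ * Φ2 * (ρRF * τ * p * β k + σRF2) / (ρRF * (ρ * τ * p * β k * Φ2 + σ2))) *
    ((p * B + σRF2 / ρRF) / (p * B + σ2 / (ρ * Φ2))) with hf
  have hMpos : (0:ℝ) < (M:ℝ) := by exact_mod_cast hM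
  have hcont : ContinuousAt f 0 := by
    apply ContinuousAt.mul
    · apply ContinuousAt.div (by fun_prop) (by fun_prop)
      simp only [mul_zero, zero_mul, zero_add]
      positivity
    · apply ContinuousAt.div (by fun_prop) (by fun_prop)
      simp only [zero_mul, zero_add]
      positivity
  have hf0 : f 0 = κ ^ 2 := by
    simp only [hf, zero_mul, mul_zero, zero_add, hκ]
    field_simp
  have htend : Tendsto f (nhdsWithin 0 (Set.Ioi 0)) (nhds (κ ^ 2)) := by
    rw [← hf0]
    exact (hcont.continuousWithinAt).tendsto
  refine htend.congr' ?_
  filter_upwards [self_mem_nhdsWithin] with p hp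
  have hp0 : 0 < p := hp
  have hsum : (∑ k', p * β k') = p * B := by rw [hB, Finset.mul_sum]
  have h1 : 0 < ρ * τ * p * β k * Φ2 + σ2 :=
    add_pos (mul_pos (mul_pos (mul_pos (mul_pos hρ hτ) hp0) (hβ k)) hΦ2) hσ2
  have h2 : 0 < ρRF * τ * p * β k + σRF2 :=
    add_pos (mul_pos (mul_pos (mul_pos hρRF hτ) hp0) (hβ k)) hσRF2
  have h3 : 0 < p * B + σ2 / (ρ * Φ2) := add_pos (mul_pos hp0 hBpos) (by positivity)
  have h4 : 0 < p * B + σRF2 / ρRF := add_pos (mul_pos hp0 hBpos) (by positivity)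
  have hβk := hβ k
  rw [hf, hS, hSRF, hμ, hμRF, hsum]
  field_simp
end

section
/- (Squaring effect, Rayleigh, ZF.) With equal pilot and data power p^d_k = p^p_k = p for all users, define the Rayleigh ZF SINRs SINR^ZF(p) = (M−K) p β_k μ_k(p) / ( Σ_{k'} p β_{k'}(1 − μ_{k'}(p)) + σ²/(ρ|Φ|²) ) with μ_k(p) = ρ τ p β_k |Φ|²/(ρ τ p β_k |Φ|² + σ²) for the atomic receiver, and SINR_RF^ZF(p) analogously with (ρ_RF, 1, σ_RF²). Then lim_{p → 0⁺} SINR^ZF(p) / SINR_RF^ZF(p) = κ², where κ = (ρ|Φ|²/σ²)/(ρ_RF/σ_RF²). -/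
open Finset Filter

/-- Squaring effect, Rayleigh fading, ZF: in the low-power regime
the SINR gain of the atomic receiver over the RF receiver tends to `κ²`, where
`κ = (ρ|Φ|²/σ²)/(ρ_RF/σ_RF²)`. -/
theorem stmt_13
    (K M : ℕ) (hK : 1 ≤ K) (hMK : K < M)
    (β : Fin K → ℝ) (ρ Φ2 σ2 ρRF σRF2 τ κ : ℝ)
    (hβ : ∀ k, 0 < β k) (hρ : 0 < ρ) (hΦ2 : 0 < Φ2) (hσ2 : 0 < σ2)
    (hρRF : 0 < ρRF) (hσRF2 : 0 < σRF2) (hτ : 0 < τ)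
    (hκ : κ = (ρ * Φ2 / σ2) / (ρRF / σRF2))
    (μ μRF : ℝ → Fin K → ℝ)
    (hμ : ∀ p k, μ p k = ρ * τ * p * β k * Φ2 / (ρ * τ * p * β k * Φ2 + σ2))
    (hμRF : ∀ p k, μRF p k = ρRF * τ * p * β k / (ρRF * τ * p * β k + σRF2))
    (S SRF : ℝ → ℝ) (k : Fin K)
    (hS : ∀ p, S p = ((M : ℝ) - K) * p * β k * μ p k /
        ((∑ k', p * β k' * (1 - μ p k')) + σ2 / (ρ * Φ2)))
    (hSRF : ∀ p, SRF p = ((M : ℝ) - K) * p * β k * μRF p k /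
        ((∑ k', p * β k' * (1 - μRF p k')) + σRF2 / ρRF)) :
    Tendsto (fun p => S p / SRF p) (nhdsWithin 0 (Set.Ioi 0)) (nhds (κ ^ 2)) := by
  have hMK' : (0:ℝ) < (M:ℝ) - K := by
    have : (K:ℝ) < M := by exact_mod_cast hMK
    linarith
  have hβk := hβ k
  set N : ℝ → ℝ := fun p => ρ*Φ2*(ρRF*τ*p*β k + σRF2) *
      ((∑ k', p*β k' * (σRF2/(ρRF*τ*p*β k'+σRF2))) + σRF2/ρRF) with hN
  set Dg : ℝ → ℝ := fun p => ρRF*(ρ*τ*p*β k*Φ2 + σ2) *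
      ((∑ k', p*β k' * (σ2/(ρ*τ*p*β k'*Φ2+σ2))) + σ2/(ρ*Φ2)) with hDg
  have key : ∀ p ∈ Set.Ioi (0:ℝ), S p / SRF p = N p / Dg p := by
    intro p hp
    have hp' : 0 < p := hp
    have e1 : ∀ k' : Fin K, 1 - μ p k' = σ2/(ρ*τ*p*β k'*Φ2+σ2) := by
      intro k'
      have h : (0:ℝ) < ρ*τ*p*β k'*Φ2+σ2 := by have := hβ k'; positivity
      rw [hμ]
      field_simp
      ring
    have e2 : ∀ k' : Fin K, 1 - μRF p k' = σRF2/(ρRF*τ*p*β k'+σRF2) := by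
      intro k'
      have h : (0:ℝ) < ρRF*τ*p*β k'+σRF2 := by have := hβ k'; positivity
      rw [hμRF]
      field_simp
      ring
    rw [hS p, hSRF p, hμ p k, hμRF p k,
      show (∑ k', p*β k'*(1-μ p k')) = ∑ k', p*β k'*(σ2/(ρ*τ*p*β k'*Φ2+σ2)) from
        Finset.sum_congr rfl (fun k' _ => by rw [e1]),
      show (∑ k', p*β k'*(1-μRF p k')) = ∑ k', p*β k'*(σRF2/(ρRF*τ*p*β k'+σRF2)) from
        Finset.sum_congr rfl (fun k' _ => by rw [e2])]
    simp only [hN, hDg]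
    set s : ℝ := ∑ k', p*β k' * (σ2/(ρ*τ*p*β k'*Φ2+σ2)) with hs
    set t : ℝ := ∑ k', p*β k' * (σRF2/(ρRF*τ*p*β k'+σRF2)) with ht
    have hs0 : 0 ≤ s := Finset.sum_nonneg fun k' _ => by have := hβ k'; positivity
    have ht0 : 0 ≤ t := Finset.sum_nonneg fun k' _ => by have := hβ k'; positivity
    have h1 : (0:ℝ) < ρ*τ*p*β k*Φ2 + σ2 := by positivity
    have h2 : (0:ℝ) < ρRF*τ*p*β k + σRF2 := by positivity
    have hD : (0:ℝ) < s + σ2/(ρ*Φ2) := by positivity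
    have hE : (0:ℝ) < t + σRF2/ρRF := by positivity
    rw [div_div_div_eq]
    field_simp
  have hNc : Tendsto N (nhdsWithin 0 (Set.Ioi 0)) (nhds (ρ*Φ2*σRF2*(σRF2/ρRF))) := by
    have : ContinuousAt N 0 := by
      apply ContinuousAt.mul (by fun_prop)
      apply ContinuousAt.add _ continuousAt_const
      apply tendsto_finset_sum
      intro k' _
      apply ContinuousAt.mul (by fun_prop)
      apply ContinuousAt.div continuousAt_const (by fun_prop)
      simp
      positivity
    have h0 : N 0 = ρ*Φ2*σRF2*(σRF2/ρRF) := by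
      simp [hN]
    have ht2 : Tendsto N (nhds 0) (nhds (N 0)) := this
    rw [h0] at ht2
    exact ht2.mono_left nhdsWithin_le_nhds
  have hDc : Tendsto Dg (nhdsWithin 0 (Set.Ioi 0)) (nhds (ρRF*σ2*(σ2/(ρ*Φ2)))) := by
    have : ContinuousAt Dg 0 := by
      apply ContinuousAt.mul (by fun_prop)
      apply ContinuousAt.add _ continuousAt_const
      apply tendsto_finset_sum
      intro k' _
      apply ContinuousAt.mul (by fun_prop)
      apply ContinuousAt.div continuousAt_const (by fun_prop)
      simp
      positivity
    have h0 : Dg 0 = ρRF*σ2*(σ2/(ρ*Φ2)) := by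
      simp [hDg]
    have ht2 : Tendsto Dg (nhds 0) (nhds (Dg 0)) := this
    rw [h0] at ht2
    exact ht2.mono_left nhdsWithin_le_nhds
  have hD0 : ρRF*σ2*(σ2/(ρ*Φ2)) ≠ 0 := by positivity
  have hlim : Tendsto (fun p => N p / Dg p) (nhdsWithin 0 (Set.Ioi 0))
      (nhds ((ρ*Φ2*σRF2*(σRF2/ρRF)) / (ρRF*σ2*(σ2/(ρ*Φ2))))) := hNc.div hDc hD0
  have hval : (ρ*Φ2*σRF2*(σRF2/ρRF)) / (ρRF*σ2*(σ2/(ρ*Φ2))) = κ^2 := by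
    rw [hκ]
    field_simp
  rw [hval] at hlim
  exact hlim.congr' (eventually_nhdsWithin_of_forall (fun p hp => (key p hp).symm))
end

section
/- (Exact transmit-power reduction by factor κ, Rayleigh.) Let κ = (ρ|Φ|²/σ²)/(ρ_RF/σ_RF²). For any per-user data powers p^d_k > 0 and pilot powers p^p_k > 0, the Rayleigh MRC and ZF SINRs of the atomic receiver evaluated at the reduced powers (p^d_k/κ, p^p_k/κ) coincide exactly with those of the conventional RF receiver at powers (p^d_k, p^p_k): M (p^d_k/κ) β_k μ_k(p^p_k/κ; ρ,|Φ|²,σ²) / ( Σ_{k'} (p^d_{k'}/κ) β_{k'} + σ²/(ρ|Φ|²) ) = M p^d_k β_k μ_{k,RF}(p^p_k) / ( Σ_{k'} p^d_{k'} β_{k'} + σ_RF²/ρ_RF ), and (M−K)(p^d_k/κ) β_k μ_k(p^p_k/κ)/( Σ_{k'} (p^d_{k'}/κ) β_{k'}(1−μ_{k'}(p^p_{k'}/κ)) + σ²/(ρ|Φ|²) ) = (M−K) p^d_k β_k μ_{k,RF}(p^p_k)/( Σ_{k'} p^d_{k'} β_{k'}(1−μ_{k',RF}(p^p_{k'}))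 + σ_RF²/ρ_RF ), where μ_k(q; ρ,|Φ|²,σ²) = ρ τ q β_k |Φ|²/(ρ τ q β_k |Φ|² + σ²) and μ_{k,RF}(q) = ρ_RF τ q β_k/(ρ_RF τ q β_k + σ_RF²). -/
open Finset

/-- Exact transmit-power reduction by the factor
`κ = (ρ|Φ|²/σ²)/(ρ_RF/σ_RF²)` under Rayleigh fading: the atomic receiver's MRC and ZF
SINRs at powers `(p^d_k/κ, p^p_k/κ)` equal the RF receiver's SINRs at `(p^d_k, p^p_k)`. -/
theorem stmt_14
    (K M : ℕ) (hK : 1 ≤ K) (hMK : K < M)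
    (β pd pp : Fin K → ℝ) (ρ Φ2 σ2 ρRF σRF2 τ κ : ℝ)
    (hβ : ∀ k, 0 < β k) (hpd : ∀ k, 0 < pd k) (hpp : ∀ k, 0 < pp k)
    (hρ : 0 < ρ) (hΦ2 : 0 < Φ2) (hσ2 : 0 < σ2)
    (hρRF : 0 < ρRF) (hσRF2 : 0 < σRF2) (hτ : 0 < τ)
    (hκ : κ = (ρ * Φ2 / σ2) / (ρRF / σRF2))
    (μ μRF : ℝ → Fin K → ℝ)
    (hμ : ∀ q k, μ q k = ρ * τ * q * β k * Φ2 / (ρ * τ * q * β k * Φ2 + σ2))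
    (hμRF : ∀ q k, μRF q k = ρRF * τ * q * β k / (ρRF * τ * q * β k + σRF2))
    (k : Fin K) :
    ((M : ℝ) * (pd k / κ) * β k * μ (pp k / κ) k /
        ((∑ k', (pd k' / κ) * β k') + σ2 / (ρ * Φ2))
      = (M : ℝ) * pd k * β k * μRF (pp k) k /
        ((∑ k', pd k' * β k') + σRF2 / ρRF))
    ∧ (((M : ℝ) - K) * (pd k / κ) * β k * μ (pp k / κ) k /
        ((∑ k', (pd k' / κ) * β k' * (1 - μ (pp k' / κ) k')) + σ2 / (ρ * Φ2))
      = ((M : ℝ) - K) * pd k * β k * μRF (pp k) k /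
        ((∑ k', pd k' * β k' * (1 - μRF (pp k') k')) + σRF2 / ρRF)) := by
  have hκ0 : 0 < κ := by rw [hκ]; positivity
  have hκne := hκ0.ne'
  -- μ at reduced power equals μRF
  have hμeq : ∀ k', μ (pp k' / κ) k' = μRF (pp k') k' := by
    intro k'
    rw [hμ, hμRF]
    have h1 := hpp k'
    have h2 := hβ k'
    have ha : 0 < ρ * τ * (pp k' / κ) * β k' * Φ2 + σ2 := by positivity
    have hb : 0 < ρRF * τ * (pp k') * β k' + σRF2 := by positivity
    rw [div_eq_div_iff ha.ne' hb.ne']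
    subst hκ
    field_simp
  have hσeq : σ2 / (ρ * Φ2) = (σRF2 / ρRF) / κ := by
    subst hκ; field_simp
  have hcancel : ∀ N D : ℝ, (N / κ) / (D / κ) = N / D := by
    intro N D
    rw [div_div_div_comm, div_self hκne, div_one]
  constructor
  · have hnum : (M : ℝ) * (pd k / κ) * β k * μ (pp k / κ) k
        = ((M : ℝ) * pd k * β k * μRF (pp k) k) / κ := by
      rw [hμeq]; ring
    have hden : (∑ k', (pd k' / κ) * β k') + σ2 / (ρ * Φ2)
        = ((∑ k', pd k' * β k') + σRF2 / ρRF) / κ := by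
      rw [hσeq, add_div, Finset.sum_div]
      congr 1
      exact Finset.sum_congr rfl fun k' _ => by ring
    rw [hnum, hden, hcancel]
  · have hnum : ((M : ℝ) - K) * (pd k / κ) * β k * μ (pp k / κ) k
        = (((M : ℝ) - K) * pd k * β k * μRF (pp k) k) / κ := by
      rw [hμeq]; ring
    have hden : (∑ k', (pd k' / κ) * β k' * (1 - μ (pp k' / κ) k')) + σ2 / (ρ * Φ2)
        = ((∑ k', pd k' * β k' * (1 - μRF (pp k') k')) + σRF2 / ρRF) / κ := by
      rw [hσeq, add_div, Finset.sum_div]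
      congr 1
      exact Finset.sum_congr rfl fun k' _ => by rw [hμeq]; ring
    rw [hnum, hden, hcancel]
end

section
/- (Exact range extension by factor √κ, Rayleigh.) Let κ = (ρ|Φ|²/σ²)/(ρ_RF/σ_RF²). For any data powers p^d_k > 0, pilot powers p^p_k > 0, and large-scale coefficients β_k > 0, the Rayleigh MRC and ZF SINRs of the atomic receiver evaluated with all large-scale coefficients scaled down to β_k/κ coincide exactly with those of the conventional RF receiver with coefficients β_k. In particular, since free-space path loss scales as β(d) ∝ 1/d², at equal transmit powers the atomic receiver achieves the RF receiver's SINR at a propagation distance larger by the factor √κ. -/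
open Finset

lemma aux_div_div (κ x y : ℝ) (hκ : κ ≠ 0) : (x / κ) / (y / κ) = x / y := by
  rw [div_div_div_comm, div_self hκ, div_one]

/-- Exact range extension by `√κ` under Rayleigh fading: the atomic
receiver's MRC and ZF SINRs with all large-scale coefficients scaled to `β_k/κ`
coincide with the RF receiver's SINRs with coefficients `β_k`; and since free-space
path loss scales as `β(d) = c/d²`, a distance larger by `√κ` scales `β` by `1/κ`. -/
theorem stmt_15
    (K M : ℕ) (hK : 1 ≤ K) (hMK : K < M)
    (β pd pp : Fin K → ℝ) (ρ Φ2 σ2 ρRF σRF2 τ κ : ℝ)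
    (hβ : ∀ k, 0 < β k) (hpd : ∀ k, 0 < pd k) (hpp : ∀ k, 0 < pp k)
    (hρ : 0 < ρ) (hΦ2 : 0 < Φ2) (hσ2 : 0 < σ2)
    (hρRF : 0 < ρRF) (hσRF2 : 0 < σRF2) (hτ : 0 < τ)
    (hκ : κ = (ρ * Φ2 / σ2) / (ρRF / σRF2))
    (μA μRF : Fin K → ℝ)
    (hμA : ∀ k, μA k = ρ * τ * pp k * (β k / κ) * Φ2
        / (ρ * τ * pp k * (β k / κ) * Φ2 + σ2))
    (hμRF : ∀ k, μRF k = ρRF * τ * pp k * β k / (ρRF * τ * pp k * β k + σRF2))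
    (k : Fin K) :
    ((M : ℝ) * pd k * (β k / κ) * μA k /
        ((∑ k', pd k' * (β k' / κ)) + σ2 / (ρ * Φ2))
      = (M : ℝ) * pd k * β k * μRF k / ((∑ k', pd k' * β k') + σRF2 / ρRF))
    ∧ (((M : ℝ) - K) * pd k * (β k / κ) * μA k /
        ((∑ k', pd k' * (β k' / κ) * (1 - μA k')) + σ2 / (ρ * Φ2))
      = ((M : ℝ) - K) * pd k * β k * μRF k /
        ((∑ k', pd k' * β k' * (1 - μRF k')) + σRF2 / ρRF))
    ∧ (∀ c d : ℝ, 0 < d → c / (Real.sqrt κ * d) ^ 2 = (c / d ^ 2) / κ) := by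
  have hκpos : 0 < κ := by
    rw [hκ]; positivity
  have hκne : κ ≠ 0 := hκpos.ne'
  -- key relation: ρ * Φ2 / (κ * σ2) = ρRF / σRF2
  have hkey : ρ * Φ2 * σRF2 = κ * σ2 * ρRF := by
    rw [hκ]; field_simp
  have hμeq : ∀ j, μA j = μRF j := by
    intro j
    rw [hμA, hμRF]
    have h1 : ρ * τ * pp j * (β j / κ) * Φ2 + σ2 > 0 :=
      add_pos (mul_pos (mul_pos (mul_pos (mul_pos hρ hτ) (hpp j))
        (div_pos (hβ j) hκpos)) hΦ2) hσ2
    have h2 : ρRF * τ * pp j * β j + σRF2 > 0 :=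
      add_pos (mul_pos (mul_pos (mul_pos hρRF hτ) (hpp j)) (hβ j)) hσRF2
    rw [div_eq_div_iff h1.ne' h2.ne']
    have hβj := (hβ j).ne'
    field_simp
    linear_combination (pp j) * hkey
  have hnoise : σ2 / (ρ * Φ2) = (σRF2 / ρRF) / κ := by
    rw [div_div, div_eq_div_iff (by positivity) (by positivity : (ρRF * κ:ℝ) ≠ 0)]
    nlinarith [hkey]
  have hS1 : (∑ k', pd k' * (β k' / κ)) = (∑ k', pd k' * β k') / κ := by
    rw [Finset.sum_div]; exact Finset.sum_congr rfl fun j _ => by ring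
  have hS2 : (∑ k', pd k' * (β k' / κ) * (1 - μA k'))
      = (∑ k', pd k' * β k' * (1 - μRF k')) / κ := by
    rw [Finset.sum_div]
    exact Finset.sum_congr rfl fun j _ => by rw [hμeq j]; ring
  refine ⟨?_, ?_, ?_⟩
  · rw [hμeq k, hS1, hnoise, ← add_div,
      show (M : ℝ) * pd k * (β k / κ) * μRF k
        = ((M : ℝ) * pd k * β k * μRF k) / κ by ring,
      aux_div_div _ _ _ hκne]
  · rw [hμeq k, hS2, hnoise, ← add_div,
      show ((M : ℝ) - K) * pd k * (β k / κ) * μRF k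
        = (((M : ℝ) - K) * pd k * β k * μRF k) / κ by ring,
      aux_div_div _ _ _ hκne]
  · intro c d hd
    rw [mul_pow, Real.sq_sqrt hκpos.le, div_div, mul_comm]
end
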